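/- arXiv:2004.14724 — 2 statements merged into one kernel-verified Lean document; each statement's English description precedes it below -/
import Mathlib

section
/- Let D be a directed acyclic graph on vertex set N and let S ⊆ N be a dissociation set of the moralized graph of D (i.e., every vertex of Mo(D) − S has degree at most one). Then at most 2|S| vertices in N \ S have a descendant in S. -/
open scoped Classical

variable {V : Type*}

/-- The arc relation of an arc set. -/
def arcRel (A : Set (V × V)) : V → V → Prop := fun u v => (u, v) ∈ A

/-- `(N, A)` is a directed acyclic graph: no directed cycles. -/
def IsDAG (A : Set (V × V)) : Prop := ∀ v : V, ¬ Relation.TransGen (arcRel A) v v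

/-- Parent set of `v` under arc set `A`. -/
def parents (A : Set (V × V)) (v : V) : Set V := {u | (u, v) ∈ A}

/-- `w` is a descendant of `v`: there is a (nonempty) directed path from `v` to `w`. -/
def Descends (A : Set (V × V)) (v w : V) : Prop := Relation.TransGen (arcRel A) v w

/-- The moralized graph of `(N, A)`: edges between adjacent vertices and
between vertices with a common child. -/
def Mo (A : Set (V × V)) : SimpleGraph V where
  Adj u v := u ≠ v ∧ ((u, v) ∈ A ∨ (v, u) ∈ A ∨ ∃ w, (u, w) ∈ A ∧ (v, w) ∈ A)
  symm := by
    constructor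
    intro u v h
    obtain ⟨hne, h⟩ := h
    refine ⟨hne.symm, ?_⟩
    rcases h with h | h | ⟨w, h1, h2⟩
    · exact Or.inr (Or.inl h)
    · exact Or.inl h
    · exact Or.inr (Or.inr ⟨w, h2, h1⟩)
  loopless := ⟨fun v h => h.1 rfl⟩

/-- `S` is a dissociation set of `G`: `G − S` has maximum degree at most one. -/
def IsDissoc (G : SimpleGraph V) (S : Set V) : Prop :=
  ∀ v ∉ S, {w | w ∉ S ∧ G.Adj v w}.ncard ≤ 1

/-- Arcs give distinct endpoints in a DAG. -/
lemma arc_ne {A : Set (V × V)} (hdag : IsDAG A) {u v : V} (h : (u, v) ∈ A) : u ≠ v := by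
  rintro rfl
  exact hdag u (Relation.TransGen.single h)

/-- An arc gives a moral edge. -/
lemma adj_of_arc {A : Set (V × V)} (hdag : IsDAG A) {u v : V} (h : (u, v) ∈ A) :
    (Mo A).Adj u v := show u ≠ v ∧ _ from ⟨arc_ne hdag h, Or.inl h⟩

/-- Uniqueness of the non-`S` neighbor of a non-`S` vertex. -/
lemma uniq_nbr {A : Set (V × V)} {S : Set V} [Fintype V] (hdis : IsDissoc (Mo A) S)
    {u x y : V} (hu : u ∉ S) (hx : x ∉ S) (hy : y ∉ S)
    (hax : (Mo A).Adj u x) (hay : (Mo A).Adj u y) : x = y := by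
  have h := (Set.ncard_le_one (Set.toFinite _)).mp (hdis u hu)
  exact h x ⟨hx, hax⟩ y ⟨hy, hay⟩

/-- Any vertex outside `S` with a descendant in `S` reaches `S` in at most two steps. -/
lemma reach_two {A : Set (V × V)} {S : Set V} [Fintype V]
    (hdag : IsDAG A) (hdis : IsDissoc (Mo A) S) {v w : V}
    (h : Descends A v w) (hw : w ∈ S) (hv : v ∉ S) :
    ∃ w' ∈ S, (v, w') ∈ A ∨ ∃ u, u ∉ S ∧ (v, u) ∈ A ∧ (u, w') ∈ A := by
  revert hv
  induction h using Relation.TransGen.head_induction_on with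
  | single hvw => exact fun hv => ⟨w, hw, Or.inl hvw⟩
  | head hvu hu ihu =>
    intro hv
    rename_i v' u
    by_cases huS : u ∈ S
    · exact ⟨u, huS, Or.inl hvu⟩
    · obtain ⟨w', hw', hcase⟩ := ihu huS
      rcases hcase with huw' | ⟨u', hu'S, huu', hu'w'⟩
      · exact ⟨w', hw', Or.inr ⟨u, huS, hvu, huw'⟩⟩
      · -- v' and u' are both non-S neighbors of u, hence equal
        have h1 : (Mo A).Adj u v' := (adj_of_arc hdag hvu).symm
        have h2 : (Mo A).Adj u u' := adj_of_arc hdag huu'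
        have : v' = u' := uniq_nbr hdis huS hv hu'S h1 h2
        exact ⟨w', hw', Or.inl (this ▸ hu'w')⟩

/-- At most `2|S|` vertices outside a dissociation set `S` of the moralized graph
have a descendant in `S`. -/
theorem stmt_0 [Fintype V] (A : Set (V × V)) (S : Set V)
    (hdag : IsDAG A) (hdis : IsDissoc (Mo A) S) :
    {v | v ∉ S ∧ ∃ w ∈ S, Descends A v w}.ncard ≤ 2 * S.ncard := by
  set C : V → Set V := fun w =>
    {v | v ∉ S ∧ ((v, w) ∈ A ∨ ∃ u, u ∉ S ∧ (v, u) ∈ A ∧ (u, w) ∈ A)} with hC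
  -- each C w has at most 2 elements
  have hCle : ∀ w, (C w).ncard ≤ 2 := by
    intro w
    rcases Set.eq_empty_or_nonempty (C w) with he | ⟨a, ha⟩
    · simp [he]
    · -- extract a witness parent u of w outside S
      obtain ⟨haS, hcase⟩ := ha
      obtain ⟨u, huS, huw⟩ : ∃ u, u ∉ S ∧ (u, w) ∈ A := by
        rcases hcase with h | ⟨u, h1, h2, h3⟩
        · exact ⟨a, haS, h⟩
        · exact ⟨u, h1, h3⟩
      have hsub : C w ⊆ insert u {z | z ∉ S ∧ (Mo A).Adj u z} := by
        rintro x ⟨hxS, hx⟩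
        rcases hx with hxw | ⟨u', hu'S, hxu', hu'w⟩
        · by_cases hxu : x = u
          · exact Set.mem_insert_iff.mpr (Or.inl hxu)
          · refine Set.mem_insert_iff.mpr (Or.inr ⟨hxS, ?_⟩)
            exact show u ≠ x ∧ _ from ⟨fun h => hxu h.symm, Or.inr (Or.inr ⟨w, huw, hxw⟩)⟩
        · by_cases hu'u : u' = u
          · subst hu'u
            exact Set.mem_insert_iff.mpr (Or.inr ⟨hxS, (adj_of_arc hdag hxu').symm⟩)
          · have hadj : (Mo A).Adj u' u := show u' ≠ u ∧ _ from ⟨hu'u, Or.inr (Or.inr ⟨w, hu'w, huw⟩)⟩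
            have hx' : (Mo A).Adj u' x := (adj_of_arc hdag hxu').symm
            have : x = u := uniq_nbr hdis hu'S hxS huS hx' hadj
            exact Set.mem_insert_iff.mpr (Or.inl this)
      calc (C w).ncard ≤ (insert u {z | z ∉ S ∧ (Mo A).Adj u z}).ncard :=
            Set.ncard_le_ncard hsub (Set.toFinite _)
        _ ≤ {z | z ∉ S ∧ (Mo A).Adj u z}.ncard + 1 := Set.ncard_insert_le _ _
        _ ≤ 1 + 1 := by gcongr; exact hdis u huS
  -- the target set is contained in the union of the C w for w ∈ S
  set S' : Finset V := (Set.toFinite S).toFinset with hS'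
  set F : V → Finset V := fun w => (Set.toFinite (C w)).toFinset with hF
  have hsub : {v | v ∉ S ∧ ∃ w ∈ S, Descends A v w} ⊆ ↑(S'.biUnion F) := by
    rintro v ⟨hvS, w, hw, hvw⟩
    obtain ⟨w', hw', hcase⟩ := reach_two hdag hdis hvw hw hvS
    simp only [Finset.coe_biUnion, Set.mem_iUnion, Finset.mem_coe, Finset.mem_biUnion]
    exact ⟨w', by simpa [hS'] using hw', by simp [hF, hC]; exact ⟨hvS, hcase⟩⟩
  calc {v | v ∉ S ∧ ∃ w ∈ S, Descends A v w}.ncard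
      ≤ (↑(S'.biUnion F) : Set V).ncard := Set.ncard_le_ncard hsub (Set.toFinite _)
    _ = (S'.biUnion F).card := Set.ncard_coe_finset _
    _ ≤ S'.card * 2 := Finset.card_biUnion_le_card_mul _ _ _ (by
          intro w _
          have := hCle w
          rwa [Set.ncard_eq_toFinset_card (C w) (Set.toFinite _)] at this)
    _ = 2 * S.ncard := by
          rw [Nat.mul_comm, hS', Set.ncard_eq_toFinset_card S (Set.toFinite _)]
end

section
/- Let G = (V, E) be an undirected graph with |V| = n divisible by 3. Define local scores on N = V by: f_v({w}) = 1 if w ∈ N_G(v); f_v({u,w}) = n if {u,w} ⊆ N_G(v); and f_v(P) = 0 otherwise. Then G admits a partition of V into n/3 vertex-disjoint triangles if and only if there exists an arc set A ⊆ N × N such that (N, A) is a DAG, every connected component of the moralized graph of (N, A) has at most 3 vertices, and Σ_{v∈N} f_v(P_v^A) ≥ (n² + n)/3. -/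
open scoped Classical

variable {V : Type*}

lemma mo_adj_iff (A : Set (V × V)) (u v : V) :
    (Mo A).Adj u v ↔ u ≠ v ∧ ((u, v) ∈ A ∨ (v, u) ∈ A ∨ ∃ w, (u, w) ∈ A ∧ (v, w) ∈ A) :=
  Iff.rfl

lemma dag_no_loop {A : Set (V × V)} (hA : IsDAG A) {v : V} (h : (v, v) ∈ A) : False :=
  hA v (Relation.TransGen.single h)

lemma dag_no_two {A : Set (V × V)} (hA : IsDAG A) {u v : V}
    (h1 : (u, v) ∈ A) (h2 : (v, u) ∈ A) : False :=
  hA u (Relation.TransGen.head h1 (Relation.TransGen.single h2))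

def reach (A : Set (V × V)) (v : V) : Set V := {w | (Mo A).Reachable v w}

lemma mem_reach_self (A : Set (V × V)) (v : V) : v ∈ reach A v :=
  SimpleGraph.Reachable.refl v

lemma reach_eq_of_mem {A : Set (V × V)} {v w : V} (h : w ∈ reach A v) :
    reach A w = reach A v := by
  ext x
  exact ⟨fun hx => (h : (Mo A).Reachable v w).trans hx,
    fun hx => (h : (Mo A).Reachable v w).symm.trans hx⟩

lemma reach_eq_of_common {A : Set (V × V)} {v v' x : V}
    (h : x ∈ reach A v) (h' : x ∈ reach A v') : reach A v = reach A v' := by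
  rw [← reach_eq_of_mem h, ← reach_eq_of_mem h']

lemma parent_mem_reach {A : Set (V × V)} (hA : IsDAG A) {x v : V} (h : (x, v) ∈ A) :
    x ∈ reach A v := by
  have hne : x ≠ v := fun he => dag_no_loop hA (he ▸ h)
  exact (SimpleGraph.Adj.reachable (show (Mo A).Adj x v from ⟨hne, Or.inl h⟩)).symm

lemma parent_ne {A : Set (V × V)} (hA : IsDAG A) {x v : V} (h : x ∈ parents A v) : x ≠ v :=
  fun he => dag_no_loop hA (he ▸ h)



/-- Structure of a vertex with a two-element parent set, in a graph whose
moral components have at most 3 vertices. -/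
lemma big_struct [Fintype V] {A : Set (V × V)} (hA : IsDAG A)
    (hc : ∀ v : V, (reach A v).ncard ≤ 3) {v u w : V}
    (huw : u ≠ w) (hp : parents A v = {u, w}) :
    v ≠ u ∧ v ≠ w ∧ reach A v = {v, u, w} := by
  have hu : (u, v) ∈ A := by
    have : u ∈ parents A v := hp ▸ (by simp : u ∈ ({u, w} : Set V))
    exact this
  have hw : (w, v) ∈ A := by
    have : w ∈ parents A v := hp ▸ (by simp : w ∈ ({u, w} : Set V))
    exact this
  have hvu : v ≠ u := (parent_ne hA (show u ∈ parents A v from hu)).symm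
  have hvw : v ≠ w := (parent_ne hA (show w ∈ parents A v from hw)).symm
  refine ⟨hvu, hvw, ?_⟩
  have hsub : ({v, u, w} : Set V) ⊆ reach A v := by
    intro x hx
    simp only [Set.mem_insert_iff, Set.mem_singleton_iff] at hx
    rcases hx with rfl | rfl | rfl
    · exact mem_reach_self A _
    · exact parent_mem_reach hA hu
    · exact parent_mem_reach hA hw
  have h3 : ({v, u, w} : Set V).ncard = 3 :=
    Set.ncard_eq_three.mpr ⟨v, u, w, hvu, hvw, huw, rfl⟩
  exact (Set.eq_of_subset_of_ncard_le hsub (h3 ▸ hc v) (Set.toFinite _)).symm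

/-- Any parent of any vertex of the component `{v,u,w}` of `v` lies in the component. -/
lemma parent_in_comp [Fintype V] {A : Set (V × V)} (hA : IsDAG A)
    {v x z : V} (hz : z ∈ reach A v) (hx : (x, z) ∈ A) : x ∈ reach A v := by
  have := parent_mem_reach hA hx
  rw [reach_eq_of_mem hz] at this
  exact this



lemma one_in_comp [Fintype V] {A : Set (V × V)} (hA : IsDAG A)
    {v u w z x : V} (huw : u ≠ w) (hp : parents A v = {u, w})
    (hreach : reach A v = {v, u, w})
    (hz : z ∈ reach A v) (hzv : z ≠ v) (hpz : parents A z = {x}) :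
    (z = u ∧ x = w) ∨ (z = w ∧ x = u) := by
  have hzuw : z = u ∨ z = w := by
    rw [hreach] at hz
    simp only [Set.mem_insert_iff, Set.mem_singleton_iff] at hz
    tauto
  have hxz : (x, z) ∈ A := by
    have : x ∈ parents A z := hpz ▸ rfl
    exact this
  have hxne : x ≠ z := parent_ne hA (show x ∈ parents A z from hxz)
  have hxr : x ∈ reach A v := parent_in_comp hA hz hxz
  have hzpar : (z, v) ∈ A := by
    have : z ∈ parents A v := by
      rw [hp]; rcases hzuw with rfl | rfl <;> simp
    exact this
  have hxv : x ≠ v := by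
    rintro rfl
    exact dag_no_two hA hxz hzpar
  have hxuw : x = u ∨ x = w := by
    rw [hreach] at hxr
    simp only [Set.mem_insert_iff, Set.mem_singleton_iff] at hxr
    tauto
  rcases hzuw with rfl | rfl
  · rcases hxuw with rfl | rfl
    · exact absurd rfl hxne
    · exact Or.inl ⟨rfl, rfl⟩
  · rcases hxuw with rfl | rfl
    · exact Or.inr ⟨rfl, rfl⟩
    · exact absurd rfl hxne

lemma uniq_big [Fintype V] {A : Set (V × V)} (hA : IsDAG A)
    (hc : ∀ v : V, (reach A v).ncard ≤ 3) {v v' : V}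
    (h1 : ∃ u w, u ≠ w ∧ parents A v = {u, w})
    (h1' : ∃ u w, u ≠ w ∧ parents A v' = {u, w})
    (hr : v' ∈ reach A v) : v = v' := by
  obtain ⟨u, w, huw, hp⟩ := h1
  obtain ⟨hvu, hvw, hreach⟩ := big_struct hA hc huw hp
  obtain ⟨u', w', huw', hp'⟩ := h1'
  by_contra hne
  -- v' ∈ {u, w}; wlog facts
  have hv' : v' = u ∨ v' = w := by
    rw [hreach] at hr
    simp only [Set.mem_insert_iff, Set.mem_singleton_iff] at hr
    tauto
  -- parents of v' are distinct, lie in the component, differ from v' ; show v ∈ parents v'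
  have hu' : (u', v') ∈ A := by have : u' ∈ parents A v' := hp' ▸ (by simp); exact this
  have hw' : (w', v') ∈ A := by have : w' ∈ parents A v' := hp' ▸ (by simp); exact this
  have hv'par : (v', v) ∈ A := by
    have : v' ∈ parents A v := by rw [hp]; rcases hv' with rfl | rfl <;> simp
    exact this
  have hu'r : u' ∈ reach A v := parent_in_comp hA hr hu'
  have hw'r : w' ∈ reach A v := parent_in_comp hA hr hw'
  have hu'ne : u' ≠ v' := parent_ne hA (show u' ∈ parents A v' from hu')
  have hw'ne : w' ≠ v' := parent_ne hA (show w' ∈ parents A v' from hw')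
  -- if v ∈ parents v' we get a 2-cycle
  have hvpar : v = u' ∨ v = w' := by
    by_contra hno
    push_neg at hno
    rw [hreach] at hu'r hw'r
    simp only [Set.mem_insert_iff, Set.mem_singleton_iff] at hu'r hw'r
    -- u', w' ∈ {u,w} \ {v'}, distinct, so {u',w'} = {u,w}\{v'} ∪ ... contradiction
    rcases hv' with rfl | rfl
    · -- v' = u : u', w' ∈ {w}
      have ha : u' = w := by rcases hu'r with h | h | h <;> tauto
      have hb : w' = w := by rcases hw'r with h | h | h <;> tauto
      exact huw' (ha.trans hb.symm)
    · have ha : u' = u := by rcases hu'r with h | h | h <;> tauto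
      have hb : w' = u := by rcases hw'r with h | h | h <;> tauto
      exact huw' (ha.trans hb.symm)
  have : (v, v') ∈ A := by rcases hvpar with rfl | rfl <;> assumption
  exact dag_no_two hA this hv'par



lemma sort3 {a b c : V} (f : V → ℕ) (hinj : Function.Injective f)
    (hab : a ≠ b) (hac : a ≠ c) (hbc : b ≠ c) :
    ∃ x y z : V, x ≠ y ∧ x ≠ z ∧ y ≠ z ∧ ({x, y, z} : Set V) = {a, b, c} ∧
      f x < f y ∧ f y < f z := by
  have h1 : f a ≠ f b := fun h => hab (hinj h)
  have h2 : f a ≠ f c := fun h => hac (hinj h)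
  have h3 : f b ≠ f c := fun h => hbc (hinj h)
  rcases lt_or_gt_of_ne h1 with hab' | hab' <;>
    rcases lt_or_gt_of_ne h2 with hac' | hac' <;>
      rcases lt_or_gt_of_ne h3 with hbc' | hbc'
  · exact ⟨a, b, c, hab, hac, hbc, rfl, hab', hbc'⟩
  · exact ⟨a, c, b, hac, hab, hbc.symm, by ext x; simp; tauto, hac', hbc'⟩
  · omega
  · exact ⟨c, a, b, hac.symm, hbc.symm, hab, by ext x; simp; tauto, hac', hab'⟩
  · exact ⟨b, a, c, hab.symm, hbc, hac, by ext x; simp; tauto, hab', hac'⟩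
  · omega
  · exact ⟨b, c, a, hbc, hab.symm, hac.symm, by ext x; simp; tauto, hbc', hac'⟩
  · exact ⟨c, b, a, hbc.symm, hac.symm, hab.symm, by ext x; simp; tauto, hbc', hab'⟩



/-- `G` (with `3 ∣ n`) admits a triangle cover iff there is a DAG, all of whose
moralized-graph connected components have at most 3 vertices, achieving score at
least `(n² + n)/3` for the local scores `f_v({w}) = 1` if `w ∈ N_G(v)`,
`f_v({u,w}) = n` if `{u,w} ⊆ N_G(v)`, all other scores `0`. -/
theorem stmt_10 [Fintype V] (G : SimpleGraph V) (hn : 3 ∣ Fintype.card V) :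
    (∃ P : Set (Set V), (∀ T ∈ P, T.ncard = 3 ∧ G.IsClique T) ∧
        ∀ v : V, ∃! T, T ∈ P ∧ v ∈ T) ↔
    ∃ A : Set (V × V), IsDAG A ∧
      (∀ v : V, {w | (Mo A).Reachable v w}.ncard ≤ 3) ∧
      (∑ v : V,
        (if ∃ u w, u ≠ w ∧ G.Adj v u ∧ G.Adj v w ∧ parents A v = {u, w} then
          Fintype.card V
         else if ∃ w, G.Adj v w ∧ parents A v = {w} then 1 else 0)) ≥
        (Fintype.card V ^ 2 + Fintype.card V) / 3 := by
  classical
  obtain ⟨k, hk⟩ := hn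
  set n := Fintype.card V with hndef
  constructor
  · rintro ⟨P, hP, huniq⟩
    set ord : V → ℕ := fun v => ((Fintype.equivFin V) v : ℕ) with hords
    have hord : Function.Injective ord := fun a b h =>
      (Fintype.equivFin V).injective (Fin.val_injective h)
    set A : Set (V × V) := {p : V × V | ∃ T ∈ P, p.1 ∈ T ∧ p.2 ∈ T ∧ ord p.2 < ord p.1}
      with hAdef
    have harc : ∀ u v : V, arcRel A u v → ord v < ord u := by
      rintro u v ⟨T, hT, h1, h2, h3⟩; exact h3
    have htri : ∀ (v : V) (T T' : Set V), T ∈ P → T' ∈ P → v ∈ T → v ∈ T' → T = T' := by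
      intro v T T' hT hT' h1 h2
      exact ExistsUnique.unique (huniq v) ⟨hT, h1⟩ ⟨hT', h2⟩
    have hdag : IsDAG A := by
      intro v hv
      have key : ∀ a b : V, Relation.TransGen (arcRel A) a b → ord b < ord a := by
        intro a b h
        induction h with
        | single h => exact harc _ _ h
        | tail _ h ih => exact (harc _ _ h).trans ih
      exact lt_irrefl _ (key v v hv)
    have moAdj : ∀ u v : V, (Mo A).Adj u v → ∃ T ∈ P, u ∈ T ∧ v ∈ T := by
      rintro u v ⟨hne, h | h | ⟨w, h1, h2⟩⟩
      · obtain ⟨T, hT, h1, h2, _⟩ := h; exact ⟨T, hT, h1, h2⟩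
      · obtain ⟨T, hT, h1, h2, _⟩ := h; exact ⟨T, hT, h2, h1⟩
      · obtain ⟨T, hT, hu, hw, _⟩ := h1
        obtain ⟨T', hT', hv, hw', _⟩ := h2
        exact ⟨T, hT, hu, (htri w T T' hT hT' hw hw') ▸ hv⟩
    have reach_sub : ∀ v w : V, (Mo A).Reachable v w → v = w ∨ ∃ T ∈ P, v ∈ T ∧ w ∈ T := by
      intro v w h
      rw [SimpleGraph.reachable_iff_reflTransGen] at h
      induction h with
      | refl => exact Or.inl rfl
      | tail _ hadj ih =>
        rcases ih with rfl | ⟨T, hT, h1, h2⟩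
        · exact Or.inr (moAdj _ _ hadj)
        · obtain ⟨T', hT', h1', h2'⟩ := moAdj _ _ hadj
          exact Or.inr ⟨T, hT, h1, (htri _ T T' hT hT' h2 h1').symm ▸ h2'⟩
    have reach_eq : ∀ (v : V) (T : Set V), T ∈ P → v ∈ T →
        {w | (Mo A).Reachable v w} = T := by
      intro v T hT hvT
      ext w
      constructor
      · intro h
        rcases reach_sub v w h with rfl | ⟨T', hT', h1, h2⟩
        · exact hvT
        · exact (htri v T T' hT hT' hvT h1) ▸ h2
      · intro hw
        by_cases hvw : v = w
        · exact hvw ▸ SimpleGraph.Reachable.refl v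
        · have hne : ord v ≠ ord w := fun h => hvw (hord h)
          refine SimpleGraph.Adj.reachable ?_
          rcases lt_or_gt_of_ne hne with hlt | hlt
          · exact ⟨hvw, Or.inr (Or.inl ⟨T, hT, hw, hvT, hlt⟩)⟩
          · exact ⟨hvw, Or.inl ⟨T, hT, hvT, hw, hlt⟩⟩
    have hpar : ∀ (v : V) (T : Set V), T ∈ P → v ∈ T →
        parents A v = {u | u ∈ T ∧ ord v < ord u} := by
      intro v T hT hvT
      ext u
      constructor
      · rintro ⟨T', hT', hu, hv, hlt⟩
        exact ⟨(htri v T T' hT hT' hvT hv) ▸ hu, hlt⟩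
      · rintro ⟨hu, hlt⟩
        exact ⟨T, hT, hu, hvT, hlt⟩
    refine ⟨A, hdag, ?_, ?_⟩
    · intro v
      obtain ⟨T, ⟨hT, hvT⟩, -⟩ := huniq v
      rw [reach_eq v T hT hvT]
      exact le_of_eq (hP T hT).1
    · -- the score computation
      set s : V → ℕ := fun v =>
        if ∃ u w, u ≠ w ∧ G.Adj v u ∧ G.Adj v w ∧ parents A v = {u, w} then n
        else if ∃ w, G.Adj v w ∧ parents A v = {w} then 1 else 0 with hs
      show ∑ v : V, s v ≥ (n ^ 2 + n) / 3
      have hPfin : P.Finite := Set.toFinite P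
      set Pf : Finset (Set V) := hPfin.toFinset with hPfdef
      have hPf : ∀ T : Set V, T ∈ Pf ↔ T ∈ P := fun T => Set.Finite.mem_toFinset _
      have hdisj : ∀ T ∈ Pf, ∀ T' ∈ Pf, T ≠ T' →
          Disjoint (T.toFinset) (T'.toFinset) := by
        intro T hT T' hT' hne
        rw [Finset.disjoint_left]
        intro x hx hx'
        rw [Set.mem_toFinset] at hx hx'
        exact hne (htri x T T' ((hPf T).1 hT) ((hPf T').1 hT') hx hx')
      have hcover : (Finset.univ : Finset V) = Pf.biUnion (fun T => T.toFinset) := by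
        ext x
        simp only [Finset.mem_univ, true_iff, Finset.mem_biUnion, Set.mem_toFinset]
        obtain ⟨T, ⟨hT, hxT⟩, -⟩ := huniq x
        exact ⟨T, (hPf T).2 hT, hxT⟩
      have hsumT : ∀ T ∈ Pf, ∑ v ∈ T.toFinset, s v = n + 1 := by
        intro T hTf
        have hT := (hPf T).1 hTf
        obtain ⟨h3, hclq⟩ := hP T hT
        obtain ⟨a, b, c, hab, hac, hbc, hTeq⟩ := Set.ncard_eq_three.1 h3
        obtain ⟨x, y, z, hxy, hxz, hyz, hset, ho1, ho2⟩ := sort3 ord hord hab hac hbc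
        have hTxyz : T = {x, y, z} := hTeq.trans hset.symm
        have hxT : x ∈ T := by rw [hTxyz]; simp
        have hyT : y ∈ T := by rw [hTxyz]; simp
        have hzT : z ∈ T := by rw [hTxyz]; simp
        have hadjxy : G.Adj x y := hclq hxT hyT hxy
        have hadjxz : G.Adj x z := hclq hxT hzT hxz
        have hadjyz : G.Adj y z := hclq hyT hzT hyz
        have hpx : parents A x = {y, z} := by
          rw [hpar x T hT hxT]
          ext u
          simp only [Set.mem_setOf_eq, Set.mem_insert_iff, Set.mem_singleton_iff, hTxyz]
          constructor
          · rintro ⟨rfl | rfl | rfl, hlt⟩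
            · exact absurd hlt (lt_irrefl _)
            · exact Or.inl rfl
            · exact Or.inr rfl
          · rintro (rfl | rfl)
            · exact ⟨Or.inr (Or.inl rfl), ho1⟩
            · exact ⟨Or.inr (Or.inr rfl), ho1.trans ho2⟩
        have hpy : parents A y = {z} := by
          rw [hpar y T hT hyT]
          ext u
          simp only [Set.mem_setOf_eq, Set.mem_singleton_iff, hTxyz, Set.mem_insert_iff]
          constructor
          · rintro ⟨rfl | rfl | rfl, hlt⟩
            · exact absurd (hlt.trans ho1) (lt_irrefl _)
            · exact absurd hlt (lt_irrefl _)
            · rfl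
          · rintro rfl
            exact ⟨Or.inr (Or.inr rfl), ho2⟩
        have hpz : parents A z = ∅ := by
          rw [hpar z T hT hzT]
          ext u
          simp only [Set.mem_setOf_eq, Set.mem_empty_iff_false, iff_false, not_and, hTxyz,
            Set.mem_insert_iff, Set.mem_singleton_iff]
          rintro (rfl | rfl | rfl) <;> omega
        have hTf3 : T.toFinset = ({x, y, z} : Finset V) := by
          ext u; simp [hTxyz]
        rw [hTf3, Finset.sum_insert (by simp [hxy, hxz]),
          Finset.sum_insert (by simp [hyz]), Finset.sum_singleton]
        have hsx : s x = n := by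
          rw [hs]
          exact if_pos ⟨y, z, hyz, hadjxy, hadjxz, hpx⟩
        have hsy : s y = 1 := by
          rw [hs]
          simp only
          rw [if_neg, if_pos ⟨z, hadjyz, hpy⟩]
          rintro ⟨u, w, huw, _, _, hp⟩
          have hu : u ∈ ({z} : Set V) := by rw [← hpy, hp]; simp
          have hw : w ∈ ({z} : Set V) := by rw [← hpy, hp]; simp
          rw [Set.mem_singleton_iff] at hu hw
          exact huw (hu.trans hw.symm)
        have hsz : s z = 0 := by
          rw [hs]
          simp only
          rw [if_neg, if_neg]
          · rintro ⟨w, _, hp⟩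
            have : w ∈ (∅ : Set V) := by rw [← hpz, hp]; simp
            exact this
          · rintro ⟨u, w, _, _, _, hp⟩
            have : u ∈ (∅ : Set V) := by rw [← hpz, hp]; simp
            exact this
        rw [hsx, hsy, hsz]
      have hcard : n = 3 * Pf.card := by
        have h1 : (Finset.univ : Finset V).card = ∑ T ∈ Pf, T.toFinset.card := by
          rw [hcover]
          exact Finset.card_biUnion hdisj
        have h2 : ∀ T ∈ Pf, T.toFinset.card = 3 := by
          intro T hT
          rw [← Set.ncard_eq_toFinset_card']
          exact (hP T ((hPf T).1 hT)).1
        rw [Finset.card_univ] at h1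
        rw [hndef, h1, Finset.sum_congr rfl h2, Finset.sum_const, smul_eq_mul, mul_comm]
      have hsum : ∑ v : V, s v = Pf.card * (n + 1) := by
        rw [hcover, Finset.sum_biUnion ?_, Finset.sum_congr rfl hsumT,
          Finset.sum_const, smul_eq_mul]
        intro T hT T' hT' hne
        exact hdisj T (Finset.mem_coe.1 hT) T' (Finset.mem_coe.1 hT') hne
      rw [hsum]
      have hk' : Pf.card = k := by omega
      have hdiv : (n ^ 2 + n) / 3 = 3 * k ^ 2 + k := by
        have : n ^ 2 + n = 3 * (3 * k ^ 2 + k) := by rw [hk]; ring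
        rw [this, Nat.mul_div_cancel_left _ (by norm_num)]
      rw [hdiv, hk', hk]
      nlinarith
  · rintro ⟨A, hA, hc, hscore⟩
    have hc' : ∀ v : V, (reach A v).ncard ≤ 3 := hc
    by_cases hk0 : k = 0
    · have hVempty : IsEmpty V := Fintype.card_eq_zero_iff.mp (by omega)
      refine ⟨∅, by simp, fun v => (hVempty.false v).elim⟩
    have hk1 : 1 ≤ k := by omega
    set cond1 : V → Prop := fun v =>
      ∃ u w, u ≠ w ∧ G.Adj v u ∧ G.Adj v w ∧ parents A v = {u, w} with hcond1
    set cond2 : V → Prop := fun v => ∃ w, G.Adj v w ∧ parents A v = {w} with hcond2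
    set Big : Finset V := Finset.univ.filter cond1 with hBig
    set One : Finset V := Finset.univ.filter (fun v => ¬ cond1 v ∧ cond2 v) with hOne
    have hsum : (∑ v : V, if cond1 v then n else if cond2 v then 1 else 0)
        = n * Big.card + One.card := by
      have hpt : ∀ v : V, (if cond1 v then n else if cond2 v then 1 else 0)
          = (if v ∈ Big then n else 0) + (if v ∈ One then 1 else 0) := by
        intro v
        by_cases h1 : cond1 v
        · simp [hBig, hOne, h1]
        · by_cases h2 : cond2 v <;> simp [hBig, hOne, h1, h2]
      rw [Finset.sum_congr rfl (fun v _ => hpt v), Finset.sum_add_distrib,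
        Finset.sum_ite_mem, Finset.sum_ite_mem, Finset.univ_inter, Finset.univ_inter,
        Finset.sum_const, Finset.sum_const, smul_eq_mul, smul_eq_mul, mul_one, mul_comm]
    have hscore' : n * Big.card + One.card ≥ 3 * k ^ 2 + k := by
      have hdiv : (n ^ 2 + n) / 3 = 3 * k ^ 2 + k := by
        have : n ^ 2 + n = 3 * (3 * k ^ 2 + k) := by rw [hk]; ring
        rw [this, Nat.mul_div_cancel_left _ (by norm_num)]
      rw [← hsum, ← hdiv]
      exact hscore
    -- distinct big vertices have disjoint components
    have hbig1 : ∀ v, cond1 v → ∃ u w, u ≠ w ∧ parents A v = {u, w} := by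
      rintro v ⟨u, w, huw, _, _, hp⟩; exact ⟨u, w, huw, hp⟩
    have hbdisj : ∀ v ∈ Big, ∀ v' ∈ Big, v ≠ v' →
        Disjoint ((reach A v).toFinset) ((reach A v').toFinset) := by
      intro v hv v' hv' hne
      rw [Finset.mem_filter] at hv hv'
      by_contra hnd
      obtain ⟨x, hx, hx'⟩ := Finset.not_disjoint_iff.1 hnd
      rw [Set.mem_toFinset] at hx hx'
      have hre : reach A v = reach A v' := reach_eq_of_common hx hx'
      have : v' ∈ reach A v := hre ▸ mem_reach_self A v'
      exact hne (uniq_big hA hc' (hbig1 v hv.2) (hbig1 v' hv'.2) this)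
    have hcard3 : ∀ v ∈ Big, (reach A v).toFinset.card = 3 := by
      intro v hv
      rw [Finset.mem_filter] at hv
      obtain ⟨u, w, huw, hp⟩ := hbig1 v hv.2
      obtain ⟨hvu, hvw, hreach⟩ := big_struct hA hc' huw hp
      rw [← Set.ncard_eq_toFinset_card', hreach]
      exact Set.ncard_eq_three.mpr ⟨v, u, w, hvu, hvw, huw, rfl⟩
    have hBigle : 3 * Big.card ≤ n := by
      have h1 : (Big.biUnion (fun v => (reach A v).toFinset)).card
          = ∑ v ∈ Big, (reach A v).toFinset.card := Finset.card_biUnion hbdisj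
      rw [Finset.sum_congr rfl hcard3, Finset.sum_const, smul_eq_mul] at h1
      have h2 := Finset.card_le_univ (Big.biUnion (fun v => (reach A v).toFinset))
      omega
    have hOnele : One.card ≤ n := by
      have := Finset.card_le_univ One
      omega
    have hBigcard : Big.card = k := by nlinarith
    have hcov : Big.biUnion (fun v => (reach A v).toFinset) = Finset.univ := by
      apply Finset.eq_univ_of_card
      rw [Finset.card_biUnion hbdisj, Finset.sum_congr rfl hcard3, Finset.sum_const,
        smul_eq_mul]
      omega
    have hx_mem : ∀ x : V, ∃ v, v ∈ Big ∧ x ∈ reach A v := by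
      intro x
      have : x ∈ Big.biUnion (fun v => (reach A v).toFinset) := hcov ▸ Finset.mem_univ x
      obtain ⟨v, hv, hx⟩ := Finset.mem_biUnion.1 this
      rw [Set.mem_toFinset] at hx
      exact ⟨v, hv, hx⟩
    set f : V → V := fun z => Classical.choose (hx_mem z) with hf
    have hf1 : ∀ z : V, f z ∈ Big ∧ z ∈ reach A (f z) := fun z =>
      Classical.choose_spec (hx_mem z)
    have hzv_ne : ∀ v, cond1 v → ∀ z, ¬ cond1 z → z ≠ v := by
      rintro v hv z hnz rfl; exact hnz hv
    have hinj : Set.InjOn f ↑One := by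
      intro z hz z' hz' heq
      by_contra hne
      rw [Finset.mem_coe, Finset.mem_filter] at hz hz'
      obtain ⟨hfB, hzr⟩ := hf1 z
      obtain ⟨hfB', hz'r⟩ := hf1 z'
      rw [heq] at hzr
      rw [Finset.mem_filter] at hfB'
      obtain ⟨x, hax, hpz⟩ := hz.2.2
      obtain ⟨x', hax', hpz'⟩ := hz'.2.2
      obtain ⟨u, w, huw, hau, haw, hp⟩ := hfB'.2
      obtain ⟨hvu, hvw, hreach⟩ := big_struct hA hc' huw hp
      have hcase := one_in_comp hA huw hp hreach hzr (hzv_ne _ hfB'.2 z hz.2.1) hpz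
      have hcase' := one_in_comp hA huw hp hreach hz'r (hzv_ne _ hfB'.2 z' hz'.2.1) hpz'
      have hxz : (x, z) ∈ A := by have : x ∈ parents A z := hpz ▸ rfl; exact this
      have hxz' : (x', z') ∈ A := by have : x' ∈ parents A z' := hpz' ▸ rfl; exact this
      rcases hcase with ⟨rfl, rfl⟩ | ⟨rfl, rfl⟩ <;> rcases hcase' with ⟨h1, h2⟩ | ⟨h1, h2⟩
      · exact hne h1.symm
      · subst h1; subst h2; exact dag_no_two hA hxz hxz'
      · subst h1; subst h2; exact dag_no_two hA hxz hxz'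
      · exact hne h1.symm
    have hOne_le : One.card ≤ Big.card :=
      Finset.card_le_card_of_injOn f (fun z _ => (hf1 z).1) hinj
    have hnb : n * Big.card = 3 * k ^ 2 := by rw [hk, hBigcard]; ring
    have hOnecard : One.card = k := by omega
    -- surjectivity of f from One onto Big
    have hsurj : ∀ b ∈ Big, ∃ z, ∃ _ : z ∈ One, b = f z := by
      have := Finset.surj_on_of_inj_on_of_card_le (s := One) (t := Big)
        (fun a _ => f a) (fun a _ => (hf1 a).1)
        (fun a₁ a₂ h₁ h₂ he => hinj (Finset.mem_coe.2 h₁) (Finset.mem_coe.2 h₂) he)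
        (by omega)
      intro b hb
      obtain ⟨z, hz, hbz⟩ := this b hb
      exact ⟨z, hz, hbz⟩
    -- build the triangle cover
    refine ⟨(fun v => reach A v) '' ↑Big, ?_, ?_⟩
    · rintro T ⟨v, hvB, rfl⟩
      change (reach A v).ncard = 3 ∧ G.IsClique (reach A v)
      have hvB' : v ∈ Big := hvB
      rw [Finset.mem_filter] at hvB'
      obtain ⟨u, w, huw, hau, haw, hp⟩ := hvB'.2
      obtain ⟨hvu, hvw, hreach⟩ := big_struct hA hc' huw hp
      -- get the one-scorer in this component, providing the edge u-w
      obtain ⟨z, hzOne, hbz⟩ := hsurj v (Finset.mem_coe.1 hvB)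
      have hzr : z ∈ reach A v := hbz ▸ (hf1 z).2
      rw [Finset.mem_filter] at hzOne
      obtain ⟨x, hax, hpz⟩ := hzOne.2.2
      have hcase := one_in_comp hA huw hp hreach hzr
        (hzv_ne _ ⟨u, w, huw, hau, haw, hp⟩ z hzOne.2.1) hpz
      have hauw : G.Adj u w := by
        rcases hcase with ⟨h1, h2⟩ | ⟨h1, h2⟩
        · rw [h1, h2] at hax; exact hax
        · rw [h1, h2] at hax; exact hax.symm
      constructor
      · rw [hreach]
        exact Set.ncard_eq_three.mpr ⟨v, u, w, hvu, hvw, huw, rfl⟩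
      · rw [hreach]
        rintro a ha b hb hab
        simp only [Set.mem_insert_iff, Set.mem_singleton_iff] at ha hb
        rcases ha with rfl | rfl | rfl <;> rcases hb with rfl | rfl | rfl <;>
          first
            | exact absurd rfl hab
            | assumption
            | exact hau.symm
            | exact haw.symm
            | exact hauw.symm
    · intro x
      obtain ⟨v, hvB, hxr⟩ := hx_mem x
      refine ⟨reach A v, ⟨⟨v, hvB, rfl⟩, hxr⟩, ?_⟩
      rintro T' ⟨⟨v', hv'B, rfl⟩, hxT'⟩
      exact reach_eq_of_common hxT' hxr
end
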